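/- Let Ω : ℝ^n → ℝ be homogeneous of degree zero and integrable on the unit sphere S^{n−1} with mean value zero on S^{n−1}. For t ∈ [1,2] and j ∈ ℤ set K_t^j(x) = 2^{-j} Ω(x) |x|^{-(n-1)} χ_{{2^{j-1} t < |x| ≤ 2^j t}}(x). Then there is a constant C depending only on n such that for all ξ ∈ ℝ^n \ {0}, all t ∈ [1,2] and all j ∈ ℤ, |K̂_t^j(ξ)| ≤ C ‖Ω‖_{L^1(S^{n-1})} · min{1, |2^j ξ|}. -/

import Mathlib

open MeasureTheory Metric Set ENNReal

noncomputable section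

variable {n : ℕ}

abbrev Euc (n : ℕ) := EuclideanSpace ℝ (Fin n)

/-- The surface measure on the unit sphere `S^{n-1}`. -/
def sphereMeasure (n : ℕ) : Measure (sphere (0 : Euc n) 1) :=
  (volume : Measure (Euc n)).toSphere

/-- `Ω` is homogeneous of degree zero. -/
def HomogZero (Ω : Euc n → ℝ) : Prop :=
  ∀ (r : ℝ), 0 < r → ∀ x : Euc n, Ω (r • x) = Ω x

/-- The `L^q` norm of `Ω` on the unit sphere, as an element of `ℝ≥0∞`. -/
def sphereNorm (q : ℝ≥0∞) (Ω : Euc n → ℝ) : ℝ≥0∞ :=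
  eLpNorm (fun x : sphere (0 : Euc n) 1 => Ω x) q (sphereMeasure n)

/-- Mean value zero on the sphere. -/
def MeanZero (Ω : Euc n → ℝ) : Prop :=
  ∫ x : sphere (0 : Euc n) 1, Ω x ∂(sphereMeasure n) = 0

/-- The kernel `K_t^j`. -/
def Kk (n : ℕ) (Ω : Euc n → ℝ) (j : ℤ) (t : ℝ) (x : Euc n) : ℝ :=
  if (2 : ℝ) ^ (j - 1) * t < ‖x‖ ∧ ‖x‖ ≤ (2 : ℝ) ^ j * t then
    (2 : ℝ) ^ (-j) * Ω x / ‖x‖ ^ (n - 1) else 0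

/-- mollifier dilation `φ_l(y) = 2^{-nl} φ(2^{-l} y)`. -/
def moll (n : ℕ) (φ : Euc n → ℝ) (l : ℤ) (y : Euc n) : ℝ :=
  (2 : ℝ) ^ (-(n : ℤ) * l) * φ ((2 : ℝ) ^ (-l) • y)

/-- convolution of two scalar functions. -/
def conv (f g : Euc n → ℝ) (x : Euc n) : ℝ := ∫ y, f (x - y) * g y

/-- The (smoothed) Marcinkiewicz square function built from a kernel family
`j ↦ t ↦ kernel`. -/
def sqFun (K : ℤ → ℝ → Euc n → ℝ) (f : Euc n → ℝ) (x : Euc n) : ℝ :=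
  Real.sqrt (∫ t in (1:ℝ)..2, ∑' j : ℤ, (conv (K j t) f x) ^ 2)

/-- `M̃_Ω`. -/
def MarTilde (n : ℕ) (Ω : Euc n → ℝ) (f : Euc n → ℝ) : Euc n → ℝ :=
  sqFun (fun j t => Kk n Ω j t) f

/-- `M̃_Ω^l`, the smoothed Marcinkiewicz operator. -/
def MarTildeL (n : ℕ) (Ω φ : Euc n → ℝ) (l : ℕ) (f : Euc n → ℝ) : Euc n → ℝ :=
  sqFun (fun j t => conv (Kk n Ω j t) (moll n φ (j - l))) f

/-- The Marcinkiewicz integral `M_Ω`. -/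
def Mar (n : ℕ) (Ω : Euc n → ℝ) (f : Euc n → ℝ) (x : Euc n) : ℝ :=
  Real.sqrt (∫ t in Ioi (0:ℝ),
    (∫ y in {y : Euc n | ‖x - y‖ ≤ t}, Ω (x - y) / ‖x - y‖ ^ (n - 1) * f y) ^ 2 / t ^ 3)

/-- Axis-parallel cubes in `ℝ^n`. -/
structure Cube (n : ℕ) where
  c : Euc n
  h : ℝ
  pos : 0 < h

def Cube.set (Q : Cube n) : Set (Euc n) := {x | ∀ i, Q.c i ≤ x i ∧ x i < Q.c i + Q.h}

/-- average of an `ℝ≥0∞`-valued function over a cube. -/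
def cubeAvg (Q : Cube n) (g : Euc n → ℝ≥0∞) : ℝ≥0∞ :=
  (volume Q.set)⁻¹ * ∫⁻ x in Q.set, g x

/-- average of a real function over a cube. -/
def cubeAvgR (Q : Cube n) (f : Euc n → ℝ) : ℝ :=
  (volume Q.set).toReal⁻¹ * ∫ x in Q.set, f x

/-- The Muckenhoupt `A_p` constant (over cubes). -/
def ApConst (n : ℕ) (p : ℝ) (w : Euc n → ℝ) : ℝ≥0∞ :=
  ⨆ Q : Cube n, cubeAvg Q (fun x => ENNReal.ofReal (w x)) *
    (cubeAvg Q (fun x => ENNReal.ofReal (w x ^ (-(1:ℝ)/(p-1))))) ^ (p - 1)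

/-- Hardy–Littlewood type maximal operator over cubes, `ℝ≥0∞`-valued. -/
def cubeMaximal (g : Euc n → ℝ≥0∞) (x : Euc n) : ℝ≥0∞ :=
  ⨆ (Q : Cube n) (_ : x ∈ Q.set), cubeAvg Q g

/-- The Fujii–Wilson `A_∞` constant. -/
def AinftyConst (n : ℕ) (w : Euc n → ℝ) : ℝ≥0∞ :=
  ⨆ Q : Cube n,
    (∫⁻ x in Q.set, cubeMaximal (Q.set.indicator fun y => ENNReal.ofReal (w y)) x) /
      ∫⁻ x in Q.set, ENNReal.ofReal (w x)

/-- weighted measure `w dx`. -/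
def wMeasure (n : ℕ) (w : Euc n → ℝ) : Measure (Euc n) :=
  volume.withDensity (fun x => ENNReal.ofReal (w x))

/-- an `η`-sparse family of cubes. -/
def IsSparse (η : ℝ) (S : Set (Cube n)) : Prop :=
  S.Countable ∧ ∃ E : Cube n → Set (Euc n),
    (∀ Q ∈ S, E Q ⊆ Q.set ∧ ENNReal.ofReal η * volume Q.set ≤ volume (E Q)) ∧
    S.Pairwise fun Q Q' => Disjoint (E Q) (E Q')

/-- `{w}_{A_σ, r}` from the paper. -/
def braceConst (n : ℕ) (σ r : ℝ) (w : Euc n → ℝ) : ℝ≥0∞ :=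
  ApConst n σ w ^ (1/r) *
    max ((AinftyConst n w) ^ (1 - 1/r))
      ((AinftyConst n (fun x => w x ^ (1 - σ/(σ-1)))) ^ (1/r))

end
noncomputable section Aux

open MeasureTheory Metric Set ENNReal

namespace MarAux

variable {n : ℕ}

lemma polar_integral (h0 : n ≠ 0) (Ω : Euc n → ℝ) (hom : HomogZero Ω) (f : ℝ → ℝ) :
    ∫ x : Euc n, Ω x * f ‖x‖ =
      (∫ θ : sphere (0 : Euc n) 1, Ω θ ∂(sphereMeasure n)) *
        ∫ r : Ioi (0:ℝ), f r ∂(Measure.volumeIoiPow (n - 1)) := by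
  haveI : Nonempty (Fin n) := ⟨⟨0, Nat.pos_of_ne_zero h0⟩⟩
  haveI : Nontrivial (Euc n) := inferInstance
  have hdim : Module.finrank ℝ (Euc n) = n := finrank_euclideanSpace_fin
  have h1 : ∫ x : Euc n, Ω x * f ‖x‖ =
      ∫ x : ({(0 : Euc n)}ᶜ : Set (Euc n)), Ω x.1 * f ‖x.1‖
        ∂((volume : Measure (Euc n)).comap Subtype.val) := by
    rw [integral_subtype_comap (measurableSet_singleton _).compl fun x : Euc n => Ω x * f ‖x‖,
      MeasureTheory.restrict_compl_singleton]
  have h2 := ((volume : Measure (Euc n)).measurePreserving_homeomorphUnitSphereProd).integral_comp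
      (Homeomorph.measurableEmbedding _)
      (fun p : sphere (0 : Euc n) 1 × Ioi (0:ℝ) => Ω p.1 * f p.2)
  rw [hdim] at h2
  have h3 : ∀ x : ({(0 : Euc n)}ᶜ : Set (Euc n)),
      Ω ((homeomorphUnitSphereProd (Euc n) x).1 : Euc n) * f ((homeomorphUnitSphereProd (Euc n) x).2 : ℝ)
        = Ω x.1 * f ‖x.1‖ := by
    intro x
    have hx : (x : Euc n) ≠ 0 := x.2
    simp only [homeomorphUnitSphereProd_apply_fst_coe, homeomorphUnitSphereProd_apply_snd_coe]
    rw [hom _ (inv_pos.2 (norm_pos_iff.2 hx)) x.1]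
  rw [h1, ← integral_congr_ae (Filter.Eventually.of_forall h3), h2,
    integral_prod_mul (fun θ : sphere (0 : Euc n) 1 => Ω θ) (fun r : Ioi (0:ℝ) => f r)]
  rfl

lemma radial_integral (m : ℕ) {a b : ℝ} (ha : 0 < a) (hab : a ≤ b) (c : ℝ) :
    ∫ r : Ioi (0:ℝ), (if a < (r:ℝ) ∧ (r:ℝ) ≤ b then c / (r:ℝ) ^ m else 0)
      ∂(Measure.volumeIoiPow m) = c * (b - a) := by
  simp only [Measure.volumeIoiPow, ENNReal.ofReal]
  rw [integral_withDensity_eq_integral_smul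
    (f := fun r : Ioi (0:ℝ) => Real.toNNReal ((r:ℝ) ^ m))
    ((measurable_subtype_coe.pow_const _).real_toNNReal),
    integral_subtype_comap measurableSet_Ioi
      (fun r : ℝ => Real.toNNReal (r ^ m) • (if a < r ∧ r ≤ b then c / r ^ m else 0))]
  rw [setIntegral_congr_fun measurableSet_Ioi
    (g := fun r : ℝ => (Ioc a b).indicator (fun _ => c) r) ?_]
  · rw [integral_indicator measurableSet_Ioc, Measure.restrict_restrict measurableSet_Ioc,
      inter_eq_self_of_subset_left (Ioc_subset_Ioi_self.trans (Ioi_subset_Ioi ha.le)),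
      setIntegral_const, Real.volume_real_Ioc, max_eq_left (by linarith), smul_eq_mul,
      mul_comm]
  · intro r hr
    have hr0 : 0 < r := hr
    simp only []
    rw [NNReal.smul_def, Real.coe_toNNReal _ (pow_nonneg hr0.le _)]
    by_cases h : a < r ∧ r ≤ b
    · rw [if_pos h, indicator_of_mem (mem_Ioc.2 h)]
      rw [smul_eq_mul, mul_div_cancel₀ _ (pow_pos hr0 m).ne']
    · rw [if_neg h, indicator_of_notMem (by simpa [mem_Ioc] using h), smul_eq_mul, mul_zero]

/-- radial profile of the kernel. -/
def fker (n : ℕ) (j : ℤ) (t : ℝ) : ℝ → ℝ := fun r =>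
  if (2:ℝ) ^ (j - 1) * t < r ∧ r ≤ (2:ℝ) ^ j * t then (2:ℝ) ^ (-j) / r ^ (n - 1) else 0

lemma Kk_eq (Ω : Euc n → ℝ) (j : ℤ) (t : ℝ) (x : Euc n) :
    Kk n Ω j t x = Ω x * fker n j t ‖x‖ := by
  unfold Kk fker
  split_ifs with h
  · ring
  · rw [mul_zero]

lemma fker_nonneg (n : ℕ) (j : ℤ) (t r : ℝ) (hr : 0 ≤ r) : 0 ≤ fker n j t r := by
  unfold fker; split_ifs with h
  · positivity
  · exact le_refl 0

lemma norm_Kk_eq (Ω : Euc n → ℝ) (j : ℤ) (t : ℝ) (x : Euc n) :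
    ‖Kk n Ω j t x‖ = |Ω x| * fker n j t ‖x‖ := by
  unfold Kk fker
  split_ifs with h
  · rw [Real.norm_eq_abs, abs_div, abs_mul, abs_of_nonneg (a := (2:ℝ)^(-j)) (by positivity),
      abs_of_nonneg (a := ‖x‖ ^ (n-1)) (by positivity)]
    ring
  · simp

lemma fker_integrable (j : ℤ) {t : ℝ} (ht : 0 < t) :
    Integrable (fun r : Ioi (0:ℝ) => fker n j t r) (Measure.volumeIoiPow (n - 1)) := by
  set a : ℝ := (2:ℝ) ^ (j - 1) * t with ha_def
  set b : ℝ := (2:ℝ) ^ j * t with hb_def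
  have ha : 0 < a := mul_pos (zpow_pos two_pos _) ht
  have hbase : Integrable (fun r : ℝ => (Ioc a b).indicator (fun _ => (2:ℝ) ^ (-j)) r)
      (volume.restrict (Ioi (0:ℝ))) :=
    (((integrable_indicator_iff measurableSet_Ioc).2
      (integrableOn_const measure_Ioc_lt_top.ne))).restrict
  have h2 : Integrable (fun r : ℝ => (Ioc a b).indicator (fun _ => (2:ℝ) ^ (-j)) r)
      (Measure.map (Subtype.val : Ioi (0:ℝ) → ℝ)
        (Measure.comap (Subtype.val : Ioi (0:ℝ) → ℝ) (volume : Measure ℝ))) := by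
    rw [map_comap_subtype_coe measurableSet_Ioi]; exact hbase
  have h3 := ((MeasurableEmbedding.subtype_coe measurableSet_Ioi).integrable_map_iff).1 h2
  have hG : Integrable
      (fun r : Ioi (0:ℝ) => fker n j t r * (ENNReal.ofReal ((r:ℝ) ^ (n-1))).toReal)
      (Measure.comap Subtype.val (volume : Measure ℝ)) := by
    refine h3.congr (Filter.Eventually.of_forall fun r => ?_)
    have hr0 : (0:ℝ) < r := r.2
    simp only [Function.comp_apply, ENNReal.toReal_ofReal (pow_nonneg hr0.le _)]
    unfold fker
    by_cases h : a < (r:ℝ) ∧ (r:ℝ) ≤ b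
    · rw [indicator_of_mem (mem_Ioc.2 h), if_pos h]
      field_simp
    · rw [indicator_of_notMem (by simpa [mem_Ioc] using h), if_neg h, zero_mul]
  rw [Measure.volumeIoiPow]
  exact (integrable_withDensity_iff ((measurable_subtype_coe.pow_const _).ennreal_ofReal)
    (Filter.Eventually.of_forall fun _ => ENNReal.ofReal_lt_top)).2 hG

lemma Kk_integrable (h0 : n ≠ 0) (Ω : Euc n → ℝ) (hom : HomogZero Ω)
    (hint : Integrable (fun x : sphere (0 : Euc n) 1 => Ω x) (sphereMeasure n))
    (j : ℤ) {t : ℝ} (ht : 0 < t) : Integrable (Kk n Ω j t) (volume : Measure (Euc n)) := by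
  haveI : Nonempty (Fin n) := ⟨⟨0, Nat.pos_of_ne_zero h0⟩⟩
  haveI : Nontrivial (Euc n) := inferInstance
  have hdim : Module.finrank ℝ (Euc n) = n := finrank_euclideanSpace_fin
  have hint' : Integrable (fun x : sphere (0 : Euc n) 1 => Ω x)
      ((volume : Measure (Euc n)).toSphere) := hint
  have hprod : Integrable (fun p : sphere (0 : Euc n) 1 × Ioi (0:ℝ) => Ω p.1 * fker n j t p.2)
      (((volume : Measure (Euc n)).toSphere).prod (Measure.volumeIoiPow (n - 1))) :=
    hint'.mul_prod (fker_integrable j ht)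
  have hiff := ((volume : Measure (Euc n)).measurePreserving_homeomorphUnitSphereProd
    ).integrable_comp_emb (Homeomorph.measurableEmbedding _)
    (g := fun p : sphere (0 : Euc n) 1 × Ioi (0:ℝ) => Ω p.1 * fker n j t p.2)
  rw [hdim] at hiff
  have hcomp := hiff.2 hprod
  have hsub : Integrable (fun x : ({(0 : Euc n)}ᶜ : Set (Euc n)) => Ω x.1 * fker n j t ‖x.1‖)
      (Measure.comap Subtype.val (volume : Measure (Euc n))) := by
    refine hcomp.congr (Filter.Eventually.of_forall fun x => ?_)
    have hx : (x : Euc n) ≠ 0 := x.2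
    simp only [Function.comp_apply, homeomorphUnitSphereProd_apply_fst_coe,
      homeomorphUnitSphereProd_apply_snd_coe]
    rw [hom _ (inv_pos.2 (norm_pos_iff.2 hx)) x.1]
  have hmap : Integrable (fun x : Euc n => Ω x * fker n j t ‖x‖)
      (Measure.map Subtype.val (Measure.comap Subtype.val (volume : Measure (Euc n)))) :=
    ((MeasurableEmbedding.subtype_coe (measurableSet_singleton (0 : Euc n)).compl
      ).integrable_map_iff).2 hsub
  rw [map_comap_subtype_coe (measurableSet_singleton (0 : Euc n)).compl,
    MeasureTheory.restrict_compl_singleton] at hmap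
  exact hmap.congr (Filter.Eventually.of_forall fun x => (Kk_eq Ω j t x).symm)

lemma fker_radial {t : ℝ} (j : ℤ) (ht : 0 < t) :
    ∫ r : Ioi (0:ℝ), fker n j t r ∂(Measure.volumeIoiPow (n - 1)) =
      (2:ℝ) ^ (-j) * ((2:ℝ) ^ j * t - (2:ℝ) ^ (j - 1) * t) := by
  have ha : 0 < (2:ℝ) ^ (j - 1) * t := mul_pos (zpow_pos two_pos _) ht
  have hab : (2:ℝ) ^ (j - 1) * t ≤ (2:ℝ) ^ j * t :=
    mul_le_mul_of_nonneg_right (zpow_le_zpow_right₀ one_le_two (by omega)) ht.le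
  exact radial_integral (n - 1) ha hab ((2:ℝ) ^ (-j))

lemma norm_expI_sub_one_le (θ : ℝ) : ‖Complex.exp (θ * Complex.I) - 1‖ ≤ 2 * |θ| := by
  have habs : ‖(↑θ * Complex.I : ℂ)‖ = |θ| := by
    simp
  rcases le_total |θ| 1 with h | h
  · have := Complex.norm_exp_sub_one_le (x := ↑θ * Complex.I) (by rw [habs]; exact h)
    rw [habs] at this
    exact this
  · calc ‖Complex.exp (θ * Complex.I) - 1‖ ≤ ‖Complex.exp (θ * Complex.I)‖ + ‖(1:ℂ)‖ :=
        norm_sub_le _ _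
    _ = 2 := by rw [Complex.norm_exp_ofReal_mul_I, norm_one]; norm_num
    _ ≤ 2 * |θ| := by nlinarith

lemma Kk_support (Ω : Euc n → ℝ) (j : ℤ) (t : ℝ) {x : Euc n} (h : Kk n Ω j t x ≠ 0) :
    ‖x‖ ≤ (2:ℝ) ^ j * t := by
  unfold Kk at h
  split_ifs at h with hc
  · exact hc.2
  · exact absurd rfl h

end MarAux
end Aux
noncomputable section
theorem statement1 (n : ℕ) (hn : 2 ≤ n) (Ω : Euc n → ℝ) (hom : HomogZero Ω)
    (hint : Integrable (fun x : Metric.sphere (0 : Euc n) 1 => Ω x) (sphereMeasure n))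
    (hmean : MeanZero Ω) :
    ∃ C > 0, ∀ ξ : Euc n, ξ ≠ 0 → ∀ t ∈ Icc (1:ℝ) 2, ∀ j : ℤ,
      ENNReal.ofReal ‖VectorFourier.fourierIntegral Real.fourierChar volume (innerₗ (Euc n)) (fun x => (Kk n Ω j t x : ℂ)) ξ‖ ≤
        ENNReal.ofReal C * sphereNorm 1 Ω * ENNReal.ofReal (min 1 ‖(2:ℝ) ^ j • ξ‖) := by
  have h0 : n ≠ 0 := by omega
  refine ⟨40, by norm_num, ?_⟩
  intro ξ hξ t ht j
  obtain ⟨ht1, ht2⟩ := ht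
  have ht0 : (0:ℝ) < t := lt_of_lt_of_le one_pos ht1
  set A := ∫ θ : Metric.sphere (0 : Euc n) 1, |Ω θ| ∂(sphereMeasure n) with hA_def
  have hA0 : 0 ≤ A := integral_nonneg fun _ => abs_nonneg _
  have homabs : HomogZero (fun x : Euc n => |Ω x|) := fun r hr x => by
    simp only [hom r hr x]
  -- value of the scalar factor
  have hs : (2:ℝ) ^ (-j) * ((2:ℝ) ^ j * t - (2:ℝ) ^ (j - 1) * t) = t / 2 := by
    have h1 : (2:ℝ) ^ (j - 1) = (2:ℝ) ^ j / 2 := by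
      rw [zpow_sub₀ two_ne_zero, zpow_one]
    have h2 : (2:ℝ) ^ (-j) = ((2:ℝ) ^ j)⁻¹ := zpow_neg 2 j
    have h3 : (2:ℝ) ^ j ≠ 0 := zpow_ne_zero _ two_ne_zero
    rw [h1, h2]
    field_simp
    ring
  -- L¹-norm of the kernel
  have hL1 : ∫ x, ‖Kk n Ω j t x‖ = A * (t / 2) := by
    have h1 : ∫ x, ‖Kk n Ω j t x‖ = ∫ x : Euc n, |Ω x| * MarAux.fker n j t ‖x‖ :=
      integral_congr_ae (Filter.Eventually.of_forall fun x => MarAux.norm_Kk_eq Ω j t x)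
    rw [h1, MarAux.polar_integral h0 _ homabs (MarAux.fker n j t), MarAux.fker_radial j ht0, hs]
  -- mean zero
  have hmean0 : ∫ x, Kk n Ω j t x = 0 := by
    have h1 : ∫ x, Kk n Ω j t x = ∫ x : Euc n, Ω x * MarAux.fker n j t ‖x‖ :=
      integral_congr_ae (Filter.Eventually.of_forall fun x => MarAux.Kk_eq Ω j t x)
    have hm : (∫ θ : Metric.sphere (0 : Euc n) 1, Ω θ ∂(sphereMeasure n)) = 0 := hmean
    rw [h1, MarAux.polar_integral h0 Ω hom (MarAux.fker n j t), hm, zero_mul]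
  have hKint : Integrable (Kk n Ω j t) (volume : Measure (Euc n)) :=
    MarAux.Kk_integrable h0 Ω hom hint j ht0
  have hKcint : Integrable (fun x => (Kk n Ω j t x : ℂ)) (volume : Measure (Euc n)) :=
    hKint.ofReal
  have hKc0 : ∫ x : Euc n, (Kk n Ω j t x : ℂ) = 0 := by
    have h2 : ∫ x : Euc n, ((Kk n Ω j t x : ℝ) : ℂ) = ((∫ x, Kk n Ω j t x : ℝ) : ℂ) :=
      integral_ofReal
    rw [h2, hmean0, Complex.ofReal_zero]
  -- trivial bound
  have hb1 : ‖VectorFourier.fourierIntegral Real.fourierChar volume (innerₗ (Euc n)) (fun x => (Kk n Ω j t x : ℂ)) ξ‖ ≤ A * (t / 2) := by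
    rw [VectorFourier.fourierIntegral]
    refine le_trans (norm_integral_le_integral_norm _) (le_of_eq ?_)
    rw [← hL1]
    refine integral_congr_ae (Filter.Eventually.of_forall fun x => ?_)
    simp only [Circle.norm_smul, Complex.norm_real]
  -- cancellation bound
  have hsm : Integrable (fun x : Euc n =>
      Complex.exp (↑(-2 * Real.pi * (inner ℝ x ξ : ℝ)) * Complex.I) * (Kk n Ω j t x : ℂ))
      (volume : Measure (Euc n)) := by
    refine hKcint.bdd_mul (c := 1) ?_ (Filter.Eventually.of_forall fun x => ?_)
    · refine Continuous.aestronglyMeasurable ?_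
      exact Complex.continuous_exp.comp ((Complex.continuous_ofReal.comp
        ((continuous_const.mul ((continuous_id.inner continuous_const))))).mul continuous_const)
    · rw [Complex.norm_exp_ofReal_mul_I]
  have hcan : ‖VectorFourier.fourierIntegral Real.fourierChar volume (innerₗ (Euc n)) (fun x => (Kk n Ω j t x : ℂ)) ξ‖ ≤
      (4 * Real.pi * ‖ξ‖ * ((2:ℝ) ^ j * t)) * (A * (t / 2)) := by
    have heq : VectorFourier.fourierIntegral Real.fourierChar volume (innerₗ (Euc n)) (fun x => (Kk n Ω j t x : ℂ)) ξ =
        ∫ x : Euc n, (Complex.exp (↑(-2 * Real.pi * (inner ℝ x ξ : ℝ)) * Complex.I) - 1) *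
          (Kk n Ω j t x : ℂ) := by
      rw [Real.vector_fourierIntegral_eq_integral_exp_smul]
      simp only [smul_eq_mul, sub_mul, one_mul, innerₗ_apply_apply]
      rw [integral_sub hsm hKcint, hKc0, sub_zero]
    rw [heq]
    refine le_trans (norm_integral_le_integral_norm _) ?_
    have hmono : ∫ x, ‖(Complex.exp (↑(-2 * Real.pi * (inner ℝ x ξ : ℝ)) * Complex.I) - 1) *
        (Kk n Ω j t x : ℂ)‖ ≤
        ∫ x, (4 * Real.pi * ‖ξ‖ * ((2:ℝ) ^ j * t)) * ‖Kk n Ω j t x‖ := by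
      refine integral_mono_of_nonneg (Filter.Eventually.of_forall fun x => norm_nonneg _)
        (hKint.norm.const_mul _) (Filter.Eventually.of_forall fun x => ?_)
      by_cases hx : Kk n Ω j t x = 0
      · simp [hx]
      · have hxn : ‖x‖ ≤ (2:ℝ) ^ j * t := MarAux.Kk_support Ω j t hx
        simp only [norm_mul, Complex.norm_real]
        refine mul_le_mul_of_nonneg_right ?_ (norm_nonneg _)
        refine le_trans (MarAux.norm_expI_sub_one_le _) ?_
        have habs : |(inner ℝ x ξ : ℝ)| ≤ ‖x‖ * ‖ξ‖ := abs_real_inner_le_norm x ξ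
        have hπ : |Real.pi| = Real.pi := abs_of_pos Real.pi_pos
        have hnx : (0:ℝ) ≤ ‖ξ‖ := norm_nonneg _
        have h1 : |(-2 * Real.pi * (inner ℝ x ξ : ℝ))| = 2 * Real.pi * |(inner ℝ x ξ : ℝ)| := by
          rw [abs_mul, abs_mul, hπ, abs_neg, abs_two]
        rw [h1]
        have h2 : |(inner ℝ x ξ : ℝ)| ≤ ((2:ℝ) ^ j * t) * ‖ξ‖ :=
          habs.trans (mul_le_mul_of_nonneg_right hxn hnx)
        nlinarith [mul_le_mul_of_nonneg_left h2 (by positivity : (0:ℝ) ≤ 4 * Real.pi)]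
    refine hmono.trans (le_of_eq ?_)
    rw [integral_const_mul, hL1]
  -- the sphere norm
  have hAofReal : sphereNorm 1 Ω = ENNReal.ofReal A := by
    unfold sphereNorm
    rw [eLpNorm_one_eq_lintegral_enorm, ← ofReal_integral_norm_eq_lintegral_enorm hint]
    simp only [Real.norm_eq_abs]
    rfl
  rw [hAofReal, ← ENNReal.ofReal_mul (by norm_num), ← ENNReal.ofReal_mul (by positivity)]
  refine ENNReal.ofReal_le_ofReal ?_
  have hnorm2j : ‖(2:ℝ) ^ j • ξ‖ = (2:ℝ) ^ j * ‖ξ‖ := by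
    rw [norm_smul, Real.norm_eq_abs, abs_of_pos (by positivity : (0:ℝ) < 2 ^ j)]
  rcases le_total 1 ‖(2:ℝ) ^ j • ξ‖ with hm | hm
  · rw [min_eq_left hm]
    refine hb1.trans ?_
    nlinarith
  · rw [min_eq_right hm]
    refine hcan.trans ?_
    have key : 4 * Real.pi * ‖ξ‖ * ((2:ℝ) ^ j * t) * (A * (t / 2)) =
        (2 * Real.pi * t ^ 2) * (A * ((2:ℝ) ^ j * ‖ξ‖)) := by ring
    rw [key, hnorm2j]
    calc (2 * Real.pi * t ^ 2) * (A * ((2:ℝ) ^ j * ‖ξ‖)) ≤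
        40 * (A * ((2:ℝ) ^ j * ‖ξ‖)) := by
          refine mul_le_mul_of_nonneg_right ?_ (by positivity)
          nlinarith [Real.pi_le_four]
      _ = 40 * A * ((2:ℝ) ^ j * ‖ξ‖) := by ring
end
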